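/- Let F₁, F₂ : ℝⁿ → ℝⁿ be Lipschitz with constants l₁, l₂. Suppose x*(k+1) = F₁(x*(k)) and the trajectory x(k) evolves by x(k+1) = F_{σ(k)}(x(k)) where σ(k) ∈ {1,2}. If ‖F_m(x) - x^(m)(k+1)‖ ≤ λ‖x - x^(m)(k)‖ for each m with canonical trajectories x^(1), x^(2) satisfying ‖x^(1)(k) - x^(2)(k)‖ ≤ R for all k, then for every k, min_m ‖x(k) - x^(m)(k)‖ ≤ λR/(1-λ) + λᵏ (min_m ‖x(0) - x^(m)(0)‖ + R). -/

import Mathlib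

/-- Two-map specialization of Theorem 2: a trajectory switching arbitrarily between two
contracting systems stays near the pair of canonical trajectories. -/
theorem two_map_switching_bound {n : ℕ}
    (F : Fin 2 → EuclideanSpace ℝ (Fin n) → EuclideanSpace ℝ (Fin n))
    (l : Fin 2 → ℝ) (hLip : ∀ m (x y : EuclideanSpace ℝ (Fin n)),
      ‖F m x - F m y‖ ≤ l m * ‖x - y‖)
    (traj : Fin 2 → ℕ → EuclideanSpace ℝ (Fin n))
    (htraj : ∀ m k, traj m (k + 1) = F m (traj m k))
    (lam : ℝ) (hlam0 : 0 ≤ lam) (hlam1 : lam < 1)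
    (hcontr : ∀ m (x : EuclideanSpace ℝ (Fin n)) k,
      ‖F m x - traj m (k + 1)‖ ≤ lam * ‖x - traj m k‖)
    (R : ℝ) (hR : ∀ k, ‖traj 0 k - traj 1 k‖ ≤ R)
    (σ : ℕ → Fin 2) (x : ℕ → EuclideanSpace ℝ (Fin n))
    (hx : ∀ k, x (k + 1) = F (σ k) (x k)) :
    ∀ k, min ‖x k - traj 0 k‖ ‖x k - traj 1 k‖ ≤
      lam * R / (1 - lam) +
        lam ^ k * (min ‖x 0 - traj 0 0‖ ‖x 0 - traj 1 0‖ + R) := by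
  have hR0 : 0 ≤ R := le_trans (norm_nonneg _) (hR 0)
  set D : ℕ → ℝ := fun k => min ‖x k - traj 0 k‖ ‖x k - traj 1 k‖ with hD
  have htwo : ∀ m : Fin 2, m = 0 ∨ m = 1 := by decide
  have key : ∀ k, D (k + 1) ≤ lam * D k + lam * R := by
    intro k
    have h1 : ‖x (k + 1) - traj (σ k) (k + 1)‖ ≤ lam * ‖x k - traj (σ k) k‖ := by
      rw [hx k]; exact hcontr (σ k) (x k) k
    have h2 : ‖x k - traj (σ k) k‖ ≤ D k + R := by
      show ‖x k - traj (σ k) k‖ ≤ min ‖x k - traj 0 k‖ ‖x k - traj 1 k‖ + R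
      rw [← min_add_add_right]
      rcases htwo (σ k) with h | h <;> rw [h] <;> apply le_min
      · exact le_add_of_nonneg_right hR0
      · calc ‖x k - traj 0 k‖ ≤ ‖x k - traj 1 k‖ + ‖traj 1 k - traj 0 k‖ := by
              simpa using norm_sub_le_norm_sub_add_norm_sub (x k) (traj 1 k) (traj 0 k)
          _ ≤ ‖x k - traj 1 k‖ + R := by
              rw [norm_sub_rev (traj 1 k) (traj 0 k)]; exact add_le_add (le_refl _) (hR k)
      · calc ‖x k - traj 1 k‖ ≤ ‖x k - traj 0 k‖ + ‖traj 0 k - traj 1 k‖ := by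
              simpa using norm_sub_le_norm_sub_add_norm_sub (x k) (traj 0 k) (traj 1 k)
          _ ≤ ‖x k - traj 0 k‖ + R := add_le_add (le_refl _) (hR k)
      · exact le_add_of_nonneg_right hR0
    have h3 : D (k + 1) ≤ ‖x (k + 1) - traj (σ k) (k + 1)‖ := by
      rcases htwo (σ k) with h | h <;> rw [h]
      · exact min_le_left _ _
      · exact min_le_right _ _
    calc D (k + 1) ≤ lam * ‖x k - traj (σ k) k‖ := h3.trans h1
      _ ≤ lam * (D k + R) := by nlinarith
      _ = lam * D k + lam * R := by ring
  intro k
  induction k with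
  | zero =>
    have : 0 ≤ lam * R / (1 - lam) :=
      div_nonneg (mul_nonneg hlam0 hR0) (by linarith)
    simp only [pow_zero, one_mul]
    linarith
  | succ k ih =>
    have h1 : D (k + 1) ≤ lam * D k + lam * R := key k
    have h2 : lam * D k ≤ lam * (lam * R / (1 - lam) + lam ^ k * (D 0 + R)) := by
      exact mul_le_mul_of_nonneg_left ih hlam0
    have h3 : lam * (lam * R / (1 - lam)) + lam * R = lam * R / (1 - lam) := by
      have hne : (1 : ℝ) - lam ≠ 0 := by linarith
      field_simp
      ring
    calc D (k + 1) ≤ lam * (lam * R / (1 - lam) + lam ^ k * (D 0 + R)) + lam * R := by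
          linarith
      _ = lam * (lam * R / (1 - lam)) + lam * R + lam ^ (k + 1) * (D 0 + R) := by ring
      _ = lam * R / (1 - lam) + lam ^ (k + 1) * (D 0 + R) := by rw [h3]
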